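/- (Pointwise Picone inequality.) For every p ∈ (1,+∞), every N ≥ 1, all vectors a, b ∈ ℝ^N, and all real numbers s ≥ 0 and t > 0, one has p·(s/t)^{p−1}·⟨φ_p(b), a⟩ − (p−1)·(s/t)^p·|b|^p ≤ |a|^p, where ⟨·,·⟩ is the Euclidean inner product and |·| the Euclidean norm. -/

import Mathlib

open Real

/-- Scalar Young-type inequality: `p x^{p-1} y ≤ (p-1) x^p + y^p`. -/
lemma picone_scalar {p x y : ℝ} (hp : 1 < p) (hx : 0 ≤ x) (hy : 0 ≤ y) :
    p * x ^ (p - 1) * y ≤ (p - 1) * x ^ p + y ^ p := by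
  have hp1 : (0:ℝ) < p - 1 := by linarith
  have hppos : (0:ℝ) < p := by linarith
  have hpq : p.HolderConjugate (p / (p - 1)) := Real.HolderConjugate.conjExponent hp
  have h := Real.young_inequality_of_nonneg hy (Real.rpow_nonneg hx (p - 1)) hpq
  have hxp : (x ^ (p - 1)) ^ (p / (p - 1)) = x ^ p := by
    rw [← Real.rpow_mul hx]
    congr 1
    field_simp
  rw [hxp] at h
  have hdiv : x ^ p / (p / (p - 1)) = (p - 1) * x ^ p / p := by
    field_simp
  rw [hdiv] at h
  have h2 := mul_le_mul_of_nonneg_left h hppos.le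
  calc p * x ^ (p - 1) * y = p * (y * x ^ (p - 1)) := by ring
    _ ≤ p * (y ^ p / p + (p - 1) * x ^ p / p) := h2
    _ = (p - 1) * x ^ p + y ^ p := by field_simp; ring

/-- **Pointwise Picone inequality.** For `p ∈ (1,∞)`, all `a, b ∈ ℝ^N`, `s ≥ 0`, `t > 0`:
`p (s/t)^{p-1} ⟨φ_p(b), a⟩ - (p-1) (s/t)^p |b|^p ≤ |a|^p`, where `φ_p(b) = |b|^{p-2} b`. -/
theorem pointwise_picone (p : ℝ) (hp : 1 < p) (N : ℕ) (hN : 1 ≤ N)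
    (a b : EuclideanSpace ℝ (Fin N)) (s t : ℝ) (hs : 0 ≤ s) (ht : 0 < t) :
    p * (s / t) ^ (p - 1) * (inner ℝ (‖b‖ ^ (p - 2) • b) a : ℝ)
      - (p - 1) * (s / t) ^ p * ‖b‖ ^ p ≤ ‖a‖ ^ p := by
  set c : ℝ := s / t with hc
  have hcnn : 0 ≤ c := div_nonneg hs ht.le
  have hppos : (0:ℝ) < p := by linarith
  have hbnn : (0:ℝ) ≤ ‖b‖ := norm_nonneg b
  have hann : (0:ℝ) ≤ ‖a‖ := norm_nonneg a
  have hinner : (inner ℝ (‖b‖ ^ (p - 2) • b) a : ℝ) = ‖b‖ ^ (p - 2) * inner ℝ b a :=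
    real_inner_smul_left b a _
  have hkey : ‖b‖ ^ (p - 2) * ‖b‖ = ‖b‖ ^ (p - 1) := by
    rcases eq_or_ne b 0 with hb | hb
    · simp [hb, Real.zero_rpow (by linarith : p - 1 ≠ 0)]
    · have hb' : ‖b‖ ≠ 0 := norm_ne_zero_iff.mpr hb
      rw [show p - 1 = p - 2 + 1 by ring, Real.rpow_add_one hb']
  have h1 : ‖b‖ ^ (p - 2) * (inner ℝ b a : ℝ) ≤ ‖b‖ ^ (p - 1) * ‖a‖ := by
    calc ‖b‖ ^ (p - 2) * (inner ℝ b a : ℝ) ≤ ‖b‖ ^ (p - 2) * (‖b‖ * ‖a‖) :=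
          mul_le_mul_of_nonneg_left (real_inner_le_norm b a)
            (Real.rpow_nonneg hbnn _)
      _ = ‖b‖ ^ (p - 1) * ‖a‖ := by rw [← mul_assoc, hkey]
  have hfac : 0 ≤ p * c ^ (p - 1) :=
    mul_nonneg hppos.le (Real.rpow_nonneg hcnn _)
  have h2 : p * c ^ (p - 1) * (inner ℝ (‖b‖ ^ (p - 2) • b) a : ℝ)
      ≤ p * c ^ (p - 1) * (‖b‖ ^ (p - 1) * ‖a‖) := by
    rw [hinner]
    exact mul_le_mul_of_nonneg_left h1 hfac
  have hx : c ^ (p - 1) * ‖b‖ ^ (p - 1) = (c * ‖b‖) ^ (p - 1) :=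
    (Real.mul_rpow hcnn hbnn).symm
  have hxp : c ^ p * ‖b‖ ^ p = (c * ‖b‖) ^ p := (Real.mul_rpow hcnn hbnn).symm
  have hyoung := picone_scalar hp (mul_nonneg hcnn hbnn) hann (p := p)
  calc p * c ^ (p - 1) * (inner ℝ (‖b‖ ^ (p - 2) • b) a : ℝ) - (p - 1) * c ^ p * ‖b‖ ^ p
      ≤ p * c ^ (p - 1) * (‖b‖ ^ (p - 1) * ‖a‖) - (p - 1) * c ^ p * ‖b‖ ^ p := by
        linarith
    _ = p * (c * ‖b‖) ^ (p - 1) * ‖a‖ - (p - 1) * (c * ‖b‖) ^ p := by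
        rw [← hx, ← hxp]; ring
    _ ≤ ‖a‖ ^ p := by linarith
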